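/- Let U_t, V_t ≥ 0 with U_Σ < 1, U_t = C_U t^{−ξ_U}(1+o(1)), V_t = O(t^{−ξ_V}), where ξ_V > ξ_U > 1 and C_U > 0. Then L_t = ½ Σ_{s=1}^t ((1−𝕌)^{-1})_s V_{t−s+1} satisfies L_t = (V_Σ C_U / (2(1−U_Σ)²)) t^{−ξ_U}(1+o(1)), where V_Σ = Σ_{t≥1} V_t. -/

import Mathlib

open Filter Finset

namespace Stmt13

noncomputable def pconv (a b : ℕ → ℝ) (t : ℕ) : ℝ := ∑ s ∈ Finset.range (t+1), a s * b (t - s)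

lemma pconv_comm (a b : ℕ → ℝ) (t : ℕ) : pconv a b t = pconv b a t := by
  unfold pconv
  rw [← Finset.sum_range_reflect (fun s => b s * a (t - s)) (t+1)]
  refine Finset.sum_congr rfl fun j hj => ?_
  have hj' : j ≤ t := by have := Finset.mem_range.mp hj; omega
  have h1 : t + 1 - 1 - j = t - j := by omega
  rw [h1, Nat.sub_sub_self hj', mul_comm]

lemma sum_edge_reflect (a b : ℕ → ℝ) {K t : ℕ} (h : K ≤ t) :
    ∑ s ∈ Finset.Ico (t - K) (t + 1), a s * b (t - s)
      = ∑ k ∈ Finset.range (K + 1), b k * a (t - k) := by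
  rw [show Finset.range (K+1) = Finset.Ico 0 (K+1) by rw [Finset.range_eq_Ico]]
  refine Finset.sum_nbij' (fun s => t - s) (fun k => t - k) ?_ ?_ ?_ ?_ ?_ <;>
    intro x hx <;> simp only [Finset.mem_Ico] at hx
  · simp only [Finset.mem_Ico]; omega
  · simp only [Finset.mem_Ico]; omega
  · show t - (t - x) = x; omega
  · show t - (t - x) = x; omega
  · show a x * b (t - x) = b (t - x) * a (t - (t - x))
    have : t - (t - x) = x := by omega
    rw [this, mul_comm]

lemma mid_reflect (a b : ℕ → ℝ) {K t : ℕ} (h : K ≤ t) :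
    ∑ s ∈ Finset.Ico (K+1) (t - K), a s * b (t - s)
      = ∑ k ∈ Finset.Ico (K+1) (t - K), b k * a (t - k) := by
  refine Finset.sum_nbij' (fun s => t - s) (fun k => t - k) ?_ ?_ ?_ ?_ ?_ <;>
    intro x hx <;> simp only [Finset.mem_Ico] at hx
  · simp only [Finset.mem_Ico]; omega
  · simp only [Finset.mem_Ico]; omega
  · show t - (t - x) = x; omega
  · show t - (t - x) = x; omega
  · show a x * b (t - x) = b (t - x) * a (t - (t - x))
    have : t - (t - x) = x := by omega
    rw [this, mul_comm]

lemma pconv_split (a b : ℕ → ℝ) {K t : ℕ} (h : 2 * K + 1 ≤ t) :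
    pconv a b t
      = (∑ s ∈ Finset.range (K+1), a s * b (t - s))
        + (∑ s ∈ Finset.Ico (K+1) (t - K), a s * b (t - s))
        + (∑ k ∈ Finset.range (K+1), b k * a (t - k)) := by
  unfold pconv
  rw [Finset.range_eq_Ico,
    ← Finset.sum_Ico_consecutive (fun s => a s * b (t - s))
      (show (0:ℕ) ≤ K + 1 by omega) (show K + 1 ≤ t + 1 by omega),
    ← Finset.sum_Ico_consecutive (fun s => a s * b (t - s))
      (show K + 1 ≤ t - K by omega) (show t - K ≤ t + 1 by omega),
    ← Finset.range_eq_Ico]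
  have h4 : ∑ s ∈ Finset.Ico (t - K) (t + 1), a s * b (t - s)
      = ∑ k ∈ Finset.range (K + 1), b k * a (t - k) := sum_edge_reflect a b (by omega)
  rw [h4, add_assoc]

lemma sum_pconv (a b : ℕ → ℝ) (n : ℕ) :
    ∑ t ∈ Finset.range n, pconv a b t
      = ∑ s ∈ Finset.range n, a s * ∑ k ∈ Finset.range (n - s), b k := by
  induction n with
  | zero => simp
  | succ n ih =>
    rw [Finset.sum_range_succ, ih,
      Finset.sum_range_succ (fun s => a s * ∑ k ∈ Finset.range (n + 1 - s), b k)]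
    have h1 : ∀ s ∈ Finset.range n, a s * ∑ k ∈ Finset.range (n + 1 - s), b k
        = a s * ∑ k ∈ Finset.range (n - s), b k + a s * b (n - s) := by
      intro s hs
      have hs' : s < n := Finset.mem_range.mp hs
      have h2 : n + 1 - s = (n - s) + 1 := by omega
      rw [h2, Finset.sum_range_succ, mul_add]
    rw [Finset.sum_congr rfl h1, Finset.sum_add_distrib]
    have h5 : n + 1 - n = 1 := by omega
    rw [h5]
    show _ + pconv a b n = _
    unfold pconv
    rw [Finset.sum_range_succ (fun s => a s * b (n - s)), Finset.sum_range_one, Nat.sub_self]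
    ring




lemma exists_global_bound (a : ℕ → ℝ) (ξ c : ℝ)
    (h : ∀ᶠ t : ℕ in atTop, a t * (t:ℝ)^ξ ≤ c) :
    ∃ C, 0 ≤ C ∧ c ≤ C ∧ ∀ t : ℕ, a t * (t:ℝ)^ξ ≤ C := by
  obtain ⟨T, hT⟩ := eventually_atTop.mp h
  have hne : (Finset.range (T+1)).Nonempty := ⟨0, Finset.mem_range.mpr (Nat.succ_pos T)⟩
  set F := (Finset.range (T+1)).sup' hne (fun t => a t * (t:ℝ)^ξ) with hF
  refine ⟨max (max c 0) F, (le_max_right c 0).trans (le_max_left _ F),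
    (le_max_left c 0).trans (le_max_left _ F), ?_⟩
  intro t
  rcases le_or_gt t T with h1 | h1
  · exact le_max_of_le_right
      (Finset.le_sup' (fun t => a t * (t:ℝ)^ξ) (Finset.mem_range.mpr (by omega)))
  · exact (hT t h1.le).trans ((le_max_left c 0).trans (le_max_left _ F))

lemma ratio_rpow (ξ : ℝ) (hξ : 0 < ξ) (K : ℕ) {η : ℝ} (hη : 0 < η) :
    ∀ᶠ t : ℕ in atTop, ((t:ℝ))^ξ ≤ (1+η) * ((t:ℝ) - K)^ξ := by
  have h0 : Tendsto (fun t : ℕ => ((t:ℝ) - K)/(t:ℝ)) atTop (nhds 1) := by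
    have h1 : Tendsto (fun t : ℕ => 1 - (K:ℝ)/(t:ℝ)) atTop (nhds 1) := by
      simpa using tendsto_const_nhds.sub (tendsto_const_div_atTop_nhds_zero_nat (K:ℝ))
    apply h1.congr'
    filter_upwards [eventually_ge_atTop 1] with t ht
    have ht0 : (t:ℝ) ≠ 0 := by
      have : (1:ℝ) ≤ (t:ℝ) := by exact_mod_cast ht
      linarith
    field_simp
  have hc : ContinuousAt (fun x : ℝ => x^ξ) 1 :=
    Real.continuousAt_rpow_const 1 ξ (Or.inl one_ne_zero)
  have h2 : Tendsto (fun t : ℕ => (((t:ℝ) - K)/(t:ℝ))^ξ) atTop (nhds 1) := by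
    have := hc.tendsto.comp h0
    simpa [Function.comp_def, Real.one_rpow] using this
  have hlt : 1/(1+η) < 1 := by
    rw [div_lt_one (by linarith)]; linarith
  filter_upwards [h2.eventually_const_le hlt, eventually_ge_atTop (K+1)] with t h4 h5
  have htK : (0:ℝ) < (t:ℝ) - K := by
    have : ((K:ℝ)+1) ≤ (t:ℝ) := by exact_mod_cast h5
    linarith
  have ht0 : (0:ℝ) < (t:ℝ) := by
    have : (0:ℝ) ≤ (K:ℝ) := Nat.cast_nonneg K
    linarith
  rw [Real.div_rpow htK.le ht0.le] at h4
  have htp : (0:ℝ) < (t:ℝ)^ξ := Real.rpow_pos_of_pos ht0 ξ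
  rw [div_le_div_iff₀ (by linarith) htp] at h4
  nlinarith [h4]

lemma half_rpow (ξ : ℝ) (hξ : 0 < ξ) {m t : ℕ} (h2 : t ≤ 2*m) :
    ((t:ℝ))^ξ ≤ 2^ξ * ((m:ℕ):ℝ)^ξ := by
  have h1 : ((t:ℝ)) ≤ 2 * m := by exact_mod_cast h2
  calc ((t:ℝ))^ξ ≤ ((2:ℝ) * m)^ξ :=
        Real.rpow_le_rpow (Nat.cast_nonneg t) h1 hξ.le
    _ = 2^ξ * ((m:ℝ))^ξ := Real.mul_rpow (by norm_num) (Nat.cast_nonneg m)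

lemma edge_upper (a b : ℕ → ℝ) (ξ γ η : ℝ) (K : ℕ) (hξ : 0 < ξ)
    (han : ∀ t, 0 ≤ a t) (hbn : ∀ t, 0 ≤ b t) (hsa : Summable a)
    (hγ : 0 ≤ γ) (hη : 0 < η)
    (hb : ∀ᶠ u : ℕ in atTop, b u * (u:ℝ)^ξ ≤ γ) :
    ∀ᶠ t : ℕ in atTop,
      (∑ s ∈ Finset.range (K+1), a s * b (t-s)) * (t:ℝ)^ξ ≤ (∑' n, a n) * (γ * (1+η)) := by
  obtain ⟨Tb, hTb⟩ := eventually_atTop.mp hb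
  filter_upwards [eventually_ge_atTop (K + Tb + 1), ratio_rpow ξ hξ K hη] with t ht hrat
  rw [Finset.sum_mul]
  have key : ∀ s ∈ Finset.range (K+1), a s * b (t-s) * (t:ℝ)^ξ ≤ a s * (γ * (1+η)) := by
    intro s hs
    have hsK : s ≤ K := by have := Finset.mem_range.mp hs; omega
    have hb1 : b (t-s) * ((t - s : ℕ):ℝ)^ξ ≤ γ := hTb _ (by omega)
    have hcast : ((t - s : ℕ):ℝ) = (t:ℝ) - s := by
      rw [Nat.cast_sub (by omega)]
    have hsc : ((s:ℝ)) ≤ (K:ℝ) := by exact_mod_cast hsK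
    have htK : (0:ℝ) ≤ (t:ℝ) - K := by
      have : ((K:ℝ)) ≤ (t:ℝ) := by exact_mod_cast (by omega : K ≤ t)
      linarith
    have h3 : ((t:ℝ))^ξ ≤ (1+η) * ((t:ℝ) - s)^ξ := by
      refine hrat.trans ?_
      have := Real.rpow_le_rpow htK (by linarith : (t:ℝ) - K ≤ (t:ℝ) - s) hξ.le
      nlinarith
    calc a s * b (t-s) * (t:ℝ)^ξ = a s * (b (t-s) * (t:ℝ)^ξ) := by ring
      _ ≤ a s * (b (t-s) * ((1+η) * ((t:ℝ) - s)^ξ)) := by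
          apply mul_le_mul_of_nonneg_left _ (han s)
          exact mul_le_mul_of_nonneg_left h3 (hbn _)
      _ = a s * ((1+η) * (b (t-s) * ((t:ℝ) - s)^ξ)) := by ring
      _ ≤ a s * ((1+η) * γ) := by
          apply mul_le_mul_of_nonneg_left _ (han s)
          apply mul_le_mul_of_nonneg_left _ (by linarith)
          rw [← hcast]; exact hb1
      _ = a s * (γ * (1+η)) := by ring
  calc ∑ s ∈ Finset.range (K+1), a s * b (t-s) * (t:ℝ)^ξ
      ≤ ∑ s ∈ Finset.range (K+1), a s * (γ * (1+η)) := Finset.sum_le_sum key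
    _ = (∑ s ∈ Finset.range (K+1), a s) * (γ * (1+η)) := by rw [Finset.sum_mul]
    _ ≤ (∑' n, a n) * (γ * (1+η)) := by
        apply mul_le_mul_of_nonneg_right _ (by positivity)
        exact Summable.sum_le_tsum _ (fun i _ => han i) hsa

lemma edge_lower (a b : ℕ → ℝ) (ξ γ : ℝ) (K : ℕ) (hξ : 0 < ξ)
    (han : ∀ t, 0 ≤ a t) (hbn : ∀ t, 0 ≤ b t)
    (hb : ∀ᶠ u : ℕ in atTop, γ ≤ b u * (u:ℝ)^ξ) :
    ∀ᶠ t : ℕ in atTop,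
      (∑ s ∈ Finset.range (K+1), a s) * γ
        ≤ (∑ s ∈ Finset.range (K+1), a s * b (t-s)) * (t:ℝ)^ξ := by
  obtain ⟨Tb, hTb⟩ := eventually_atTop.mp hb
  filter_upwards [eventually_ge_atTop (K + Tb + 1)] with t ht
  rw [Finset.sum_mul, Finset.sum_mul]
  refine Finset.sum_le_sum fun s hs => ?_
  have hsK : s ≤ K := by have := Finset.mem_range.mp hs; omega
  have hb1 : γ ≤ b (t-s) * ((t - s : ℕ):ℝ)^ξ := hTb _ (by omega)
  have h2 : ((t - s : ℕ):ℝ)^ξ ≤ ((t:ℝ))^ξ := by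
    apply Real.rpow_le_rpow (Nat.cast_nonneg _) _ hξ.le
    exact_mod_cast Nat.sub_le t s
  calc a s * γ ≤ a s * (b (t-s) * ((t:ℝ))^ξ) := by
        apply mul_le_mul_of_nonneg_left _ (han s)
        refine hb1.trans (mul_le_mul_of_nonneg_left h2 (hbn _))
    _ = a s * b (t-s) * (t:ℝ)^ξ := by ring

lemma mid_sum_bound (ξ : ℝ) (hξ : 0 < ξ) (a b : ℕ → ℝ)
    (han : ∀ t, 0 ≤ a t) (hbn : ∀ t, 0 ≤ b t)
    (hsa : Summable a) (hsb : Summable b) (K t : ℕ) (W1 W2 : ℝ)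
    (hW1 : 0 ≤ W1) (hW2 : 0 ≤ W2)
    (hterm : ∀ s, K+1 ≤ s → s < t - K →
      a s * b (t-s) * (t:ℝ)^ξ ≤ 2^ξ * (W1 * a s + W2 * b (t-s))) :
    (∑ s ∈ Finset.Ico (K+1) (t - K), a s * b (t-s)) * (t:ℝ)^ξ
      ≤ 2^ξ * (W1 * (∑' n, a (n+(K+1))) + W2 * (∑' n, b (n+(K+1)))) := by
  have hta : Summable (fun n => a (n+(K+1))) := by
    rw [summable_nat_add_iff]; exact hsa
  have htb : Summable (fun n => b (n+(K+1))) := by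
    rw [summable_nat_add_iff]; exact hsb
  rcases le_or_gt (t - K) (K+1) with hsmall | hbig
  · rw [Finset.Ico_eq_empty (by omega), Finset.sum_empty, zero_mul]
    have h1 : (0:ℝ) ≤ ∑' n, a (n+(K+1)) := tsum_nonneg (fun n => han _)
    have h2 : (0:ℝ) ≤ ∑' n, b (n+(K+1)) := tsum_nonneg (fun n => hbn _)
    positivity
  · rw [Finset.sum_mul]
    calc ∑ s ∈ Finset.Ico (K+1) (t - K), a s * b (t-s) * (t:ℝ)^ξ
        ≤ ∑ s ∈ Finset.Ico (K+1) (t - K), 2^ξ * (W1 * a s + W2 * b (t-s)) := by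
          refine Finset.sum_le_sum fun s hs => ?_
          have hs' := Finset.mem_Ico.mp hs
          exact hterm s hs'.1 hs'.2
      _ = 2^ξ * (W1 * (∑ s ∈ Finset.Ico (K+1) (t - K), a s)
            + W2 * (∑ s ∈ Finset.Ico (K+1) (t - K), b (t-s))) := by
          rw [← Finset.mul_sum, Finset.sum_add_distrib, ← Finset.mul_sum, ← Finset.mul_sum]
      _ ≤ 2^ξ * (W1 * (∑' n, a (n+(K+1))) + W2 * (∑' n, b (n+(K+1)))) := by
          have hKt : K ≤ t := by omega
          have e1 : (∑ s ∈ Finset.Ico (K+1) (t - K), a s) ≤ ∑' n, a (n+(K+1)) := by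
            rw [Finset.sum_Ico_eq_sum_range]
            calc ∑ i ∈ Finset.range (t - K - (K+1)), a (K+1+i)
                = ∑ i ∈ Finset.range (t - K - (K+1)), a (i+(K+1)) := by
                  refine Finset.sum_congr rfl fun i _ => ?_
                  rw [Nat.add_comm]
              _ ≤ ∑' n, a (n+(K+1)) := Summable.sum_le_tsum _ (fun i _ => han _) hta
          have e2 : (∑ s ∈ Finset.Ico (K+1) (t - K), b (t-s)) ≤ ∑' n, b (n+(K+1)) := by
            have e3 : ∑ s ∈ Finset.Ico (K+1) (t - K), b (t-s)
                = ∑ k ∈ Finset.Ico (K+1) (t - K), b k := by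
              refine (Finset.sum_nbij' (fun s => t - s) (fun k => t - k) ?_ ?_ ?_ ?_ ?_) <;>
                intro x hx <;> simp only [Finset.mem_Ico] at hx
              · simp only [Finset.mem_Ico]; omega
              · simp only [Finset.mem_Ico]; omega
              · show t - (t - x) = x; omega
              · show t - (t - x) = x; omega
              · rfl
            rw [e3, Finset.sum_Ico_eq_sum_range]
            calc ∑ i ∈ Finset.range (t - K - (K+1)), b (K+1+i)
                = ∑ i ∈ Finset.range (t - K - (K+1)), b (i+(K+1)) := by
                  refine Finset.sum_congr rfl fun i _ => ?_
                  rw [Nat.add_comm]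
              _ ≤ ∑' n, b (n+(K+1)) := Summable.sum_le_tsum _ (fun i _ => hbn _) htb
          have h2 : (0:ℝ) < 2^ξ := Real.rpow_pos_of_pos (by norm_num) ξ
          apply mul_le_mul_of_nonneg_left _ h2.le
          exact add_le_add (mul_le_mul_of_nonneg_left e1 hW1)
            (mul_le_mul_of_nonneg_left e2 hW2)

lemma tendsto_of_bounds (f : ℕ → ℝ) (c : ℝ)
    (h1 : ∀ ε > 0, ∀ᶠ t : ℕ in atTop, f t ≤ c + ε)
    (h2 : ∀ ε > 0, ∀ᶠ t : ℕ in atTop, c - ε ≤ f t) :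
    Tendsto f atTop (nhds c) := by
  rw [tendsto_order]
  constructor
  · intro b hb
    filter_upwards [h2 ((c-b)/2) (by linarith)] with t ht
    linarith
  · intro b hb
    filter_upwards [h1 ((b-c)/2) (by linarith)] with t ht
    linarith

lemma pconv_upper (a b : ℕ → ℝ) (ξ α β : ℝ) (hξ : 0 < ξ)
    (han : ∀ t, 0 ≤ a t) (hbn : ∀ t, 0 ≤ b t)
    (hsa : Summable a) (hsb : Summable b)
    (hα : 0 ≤ α) (hβ : 0 ≤ β)
    (ha : ∀ ε > 0, ∀ᶠ t : ℕ in atTop, a t * (t:ℝ)^ξ ≤ α + ε)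
    (hb : ∀ ε > 0, ∀ᶠ t : ℕ in atTop, b t * (t:ℝ)^ξ ≤ β + ε)
    {ε : ℝ} (hε : 0 < ε) :
    ∀ᶠ t : ℕ in atTop,
      pconv a b t * (t:ℝ)^ξ ≤ (∑' n, a n) * β + (∑' n, b n) * α + ε := by
  set A := ∑' n, a n with hAdef
  set B := ∑' n, b n with hBdef
  have hA0 : 0 ≤ A := tsum_nonneg han
  have hB0 : 0 ≤ B := tsum_nonneg hbn
  obtain ⟨Ca, hCa0, _, hCa⟩ := exists_global_bound a ξ (α+1) (ha 1 one_pos)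
  obtain ⟨Cb, hCb0, _, hCb⟩ := exists_global_bound b ξ (β+1) (hb 1 one_pos)
  have h2pos : (0:ℝ) < 2^ξ := Real.rpow_pos_of_pos two_pos ξ
  set ε1 := ε/(8*(A+B+1)) with hε1def
  have hε1 : 0 < ε1 := by positivity
  set η := min 1 (ε/(4*(A*β+B*α+1))) with hηdef
  have hABmul : (0:ℝ) ≤ A*β+B*α := by positivity
  have hη : 0 < η := lt_min one_pos (by positivity)
  have hη1 : η ≤ 1 := min_le_left _ _
  set τa := ε/(8*(2^ξ)*(Cb+1)) with hτadef
  set τb := ε/(8*(2^ξ)*(Ca+1)) with hτbdef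
  have hτa : 0 < τa := by positivity
  have hτb : 0 < τb := by positivity
  obtain ⟨K, hK⟩ := eventually_atTop.mp
    (((tendsto_sum_nat_add a).eventually_le_const hτa).and
      ((tendsto_sum_nat_add b).eventually_le_const hτb))
  have hKa : (∑' n, a (n+(K+1))) ≤ τa := (hK (K+1) (by omega)).1
  have hKb : (∑' n, b (n+(K+1))) ≤ τb := (hK (K+1) (by omega)).2
  have hedge1 := edge_upper a b ξ (β+ε1) η K hξ han hbn hsa (by linarith) hη (hb ε1 hε1)
  have hedge3 := edge_upper b a ξ (α+ε1) η K hξ hbn han hsb (by linarith) hη (ha ε1 hε1)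
  filter_upwards [hedge1, hedge3, eventually_ge_atTop (2*K+2)] with t h1 h3 ht
  have hsplit := pconv_split a b (K := K) (t := t) (by omega)
  have hmid : (∑ s ∈ Finset.Ico (K+1) (t-K), a s * b (t-s)) * (t:ℝ)^ξ
      ≤ 2^ξ * (Cb * (∑' n, a (n+(K+1))) + Ca * (∑' n, b (n+(K+1)))) := by
    apply mid_sum_bound ξ hξ a b han hbn hsa hsb K t Cb Ca hCb0 hCa0
    intro s hs1 hs2
    rcases le_or_gt (2*s) t with hcase | hcase
    · have h2' : t ≤ 2*(t-s) := by omega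
      have hrp : ((t:ℝ))^ξ ≤ 2^ξ * (((t-s:ℕ)):ℝ)^ξ := half_rpow ξ hξ h2'
      calc a s * b (t-s) * (t:ℝ)^ξ
          ≤ a s * b (t-s) * (2^ξ * ((t-s:ℕ):ℝ)^ξ) :=
            mul_le_mul_of_nonneg_left hrp (mul_nonneg (han s) (hbn _))
        _ = 2^ξ * (a s * (b (t-s) * ((t-s:ℕ):ℝ)^ξ)) := by ring
        _ ≤ 2^ξ * (a s * Cb) := by
            apply mul_le_mul_of_nonneg_left _ h2pos.le
            exact mul_le_mul_of_nonneg_left (hCb _) (han s)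
        _ = 2^ξ * (Cb * a s) := by ring
        _ ≤ 2^ξ * (Cb * a s + Ca * b (t-s)) :=
            mul_le_mul_of_nonneg_left
              (le_add_of_nonneg_right (mul_nonneg hCa0 (hbn _))) h2pos.le
    · have h2' : t ≤ 2*s := by omega
      have hrp : ((t:ℝ))^ξ ≤ 2^ξ * ((s:ℕ):ℝ)^ξ := half_rpow ξ hξ h2'
      calc a s * b (t-s) * (t:ℝ)^ξ
          ≤ a s * b (t-s) * (2^ξ * ((s:ℕ):ℝ)^ξ) :=
            mul_le_mul_of_nonneg_left hrp (mul_nonneg (han s) (hbn _))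
        _ = 2^ξ * (b (t-s) * (a s * ((s:ℕ):ℝ)^ξ)) := by ring
        _ ≤ 2^ξ * (b (t-s) * Ca) := by
            apply mul_le_mul_of_nonneg_left _ h2pos.le
            exact mul_le_mul_of_nonneg_left (hCa _) (hbn _)
        _ = 2^ξ * (Ca * b (t-s)) := by ring
        _ ≤ 2^ξ * (Cb * a s + Ca * b (t-s)) :=
            mul_le_mul_of_nonneg_left
              (le_add_of_nonneg_left (mul_nonneg hCb0 (han s))) h2pos.le
  rw [hsplit, add_mul, add_mul]
  -- arithmetic
  have hTa0 : (0:ℝ) ≤ ∑' n, a (n+(K+1)) := tsum_nonneg (fun n => han _)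
  have hTb0 : (0:ℝ) ≤ ∑' n, b (n+(K+1)) := tsum_nonneg (fun n => hbn _)
  have m1 : 2^ξ * (Cb * (∑' n, a (n+(K+1))) + Ca * (∑' n, b (n+(K+1)))) ≤ ε/8 + ε/8 := by
    have i1 : Cb * (∑' n, a (n+(K+1))) ≤ (Cb+1) * τa :=
      mul_le_mul (by linarith) hKa hTa0 (by linarith)
    have i2 : Ca * (∑' n, b (n+(K+1))) ≤ (Ca+1) * τb :=
      mul_le_mul (by linarith) hKb hTb0 (by linarith)
    have j1 : 2^ξ * ((Cb+1) * τa) = ε/8 := by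
      rw [hτadef]; field_simp
    have j2 : 2^ξ * ((Ca+1) * τb) = ε/8 := by
      rw [hτbdef]; field_simp
    have k1 : 2^ξ * (Cb * (∑' n, a (n+(K+1)))) ≤ 2^ξ * ((Cb+1) * τa) :=
      mul_le_mul_of_nonneg_left i1 h2pos.le
    have k2 : 2^ξ * (Ca * (∑' n, b (n+(K+1)))) ≤ 2^ξ * ((Ca+1) * τb) :=
      mul_le_mul_of_nonneg_left i2 h2pos.le
    linarith
  have e2 : (A*β+B*α)*η ≤ ε/4 := by
    have hm := min_le_right 1 (ε/(4*(A*β+B*α+1)))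
    have step : (A*β+B*α)*η ≤ (A*β+B*α) * (ε/(4*(A*β+B*α+1))) :=
      mul_le_mul_of_nonneg_left hm hABmul
    have hc : (ε/(4*(A*β+B*α+1))) * (A*β+B*α) + (ε/(4*(A*β+B*α+1))) = ε/4 := by
      have h1 : A*β+B*α+1 ≠ 0 := by positivity
      field_simp
    have hcpos : 0 ≤ ε/(4*(A*β+B*α+1)) :=
      div_nonneg hε.le (by positivity)
    linarith
  have e3 : (A+B)*ε1*(1+η) ≤ ε/4 := by
    have hc : ε1*(A+B) + ε1 = ε/8 := by
      rw [hε1def]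
      have h1 : A+B+1 ≠ 0 := by positivity
      field_simp
    have s1 : 0 ≤ (A+B)*ε1 := mul_nonneg (by linarith) hε1.le
    have s2 : (A+B)*ε1*(1+η) ≤ (A+B)*ε1*2 :=
      mul_le_mul_of_nonneg_left (by linarith) s1
    linarith
  have hedgesum : A * ((β+ε1)*(1+η)) + B * ((α+ε1)*(1+η))
      = (A*β+B*α) + (A*β+B*α)*η + (A+B)*ε1*(1+η) := by ring
  have final : A * ((β+ε1)*(1+η)) + 2^ξ * (Cb * (∑' n, a (n+(K+1))) + Ca * (∑' n, b (n+(K+1))))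
      + B * ((α+ε1)*(1+η)) ≤ A*β + B*α + ε := by
    linarith
  calc (∑ s ∈ Finset.range (K+1), a s * b (t-s)) * (t:ℝ)^ξ
        + (∑ s ∈ Finset.Ico (K+1) (t-K), a s * b (t-s)) * (t:ℝ)^ξ
        + (∑ k ∈ Finset.range (K+1), b k * a (t-k)) * (t:ℝ)^ξ
      ≤ A * ((β+ε1)*(1+η)) + 2^ξ * (Cb * (∑' n, a (n+(K+1))) + Ca * (∑' n, b (n+(K+1))))
        + B * ((α+ε1)*(1+η)) := by
        exact add_le_add (add_le_add h1 hmid) h3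
    _ ≤ A*β + B*α + ε := final

lemma pconv_lower (a b : ℕ → ℝ) (ξ α β : ℝ) (hξ : 0 < ξ)
    (han : ∀ t, 0 ≤ a t) (hbn : ∀ t, 0 ≤ b t)
    (hsa : Summable a) (hsb : Summable b)
    (hα : 0 ≤ α) (hβ : 0 ≤ β)
    (ha : ∀ ε > 0, ∀ᶠ t : ℕ in atTop, α - ε ≤ a t * (t:ℝ)^ξ)
    (hb : ∀ ε > 0, ∀ᶠ t : ℕ in atTop, β - ε ≤ b t * (t:ℝ)^ξ)
    {ε : ℝ} (hε : 0 < ε) :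
    ∀ᶠ t : ℕ in atTop,
      (∑' n, a n) * β + (∑' n, b n) * α - ε ≤ pconv a b t * (t:ℝ)^ξ := by
  set A := ∑' n, a n with hAdef
  set B := ∑' n, b n with hBdef
  have hA0 : 0 ≤ A := tsum_nonneg han
  have hB0 : 0 ≤ B := tsum_nonneg hbn
  set ε1 := ε/(8*(A+B+1)) with hε1def
  have hε1 : 0 < ε1 := by positivity
  set τa := ε/(8*(β+1)) with hτadef
  set τb := ε/(8*(α+1)) with hτbdef
  have hτa : 0 < τa := by positivity
  have hτb : 0 < τb := by positivity
  obtain ⟨K, hK⟩ := eventually_atTop.mp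
    ((hsa.hasSum.tendsto_sum_nat.eventually_const_le (by linarith : A - τa < A)).and
      (hsb.hasSum.tendsto_sum_nat.eventually_const_le (by linarith : B - τb < B)))
  have hKa : A - τa ≤ ∑ s ∈ Finset.range (K+1), a s := (hK (K+1) (by omega)).1
  have hKb : B - τb ≤ ∑ s ∈ Finset.range (K+1), b s := (hK (K+1) (by omega)).2
  have hPaA : ∑ s ∈ Finset.range (K+1), a s ≤ A := Summable.sum_le_tsum _ (fun i _ => han i) hsa
  have hPbB : ∑ s ∈ Finset.range (K+1), b s ≤ B := Summable.sum_le_tsum _ (fun i _ => hbn i) hsb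
  have hPa0 : 0 ≤ ∑ s ∈ Finset.range (K+1), a s := Finset.sum_nonneg (fun i _ => han i)
  have hPb0 : 0 ≤ ∑ s ∈ Finset.range (K+1), b s := Finset.sum_nonneg (fun i _ => hbn i)
  have hedge1 := edge_lower a b ξ (β-ε1) K hξ han hbn (hb ε1 hε1)
  have hedge3 := edge_lower b a ξ (α-ε1) K hξ hbn han (ha ε1 hε1)
  filter_upwards [hedge1, hedge3, eventually_ge_atTop (2*K+2)] with t h1 h3 ht
  have hsplit := pconv_split a b (K := K) (t := t) (by omega)
  have hmid : 0 ≤ (∑ s ∈ Finset.Ico (K+1) (t-K), a s * b (t-s)) * (t:ℝ)^ξ :=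
    mul_nonneg (Finset.sum_nonneg fun s _ => mul_nonneg (han s) (hbn _))
      (Real.rpow_nonneg (Nat.cast_nonneg t) ξ)
  have harith1 : A*β - ε/4 ≤ (∑ s ∈ Finset.range (K+1), a s) * (β-ε1) := by
    have j1 : τa * (8*(β+1)) = ε := by rw [hτadef]; field_simp
    have j2 : ε1 * (8*(A+B+1)) = ε := by rw [hε1def]; field_simp
    nlinarith [hKa, hPaA, hPa0, hτa.le, hε1.le]
  have harith3 : B*α - ε/4 ≤ (∑ s ∈ Finset.range (K+1), b s) * (α-ε1) := by
    have j1 : τb * (8*(α+1)) = ε := by rw [hτbdef]; field_simp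
    have j2 : ε1 * (8*(A+B+1)) = ε := by rw [hε1def]; field_simp
    nlinarith [hKb, hPbB, hPb0, hτb.le, hε1.le]
  rw [hsplit, add_mul, add_mul]
  have step1 : (∑ s ∈ Finset.range (K+1), a s) * (β-ε1)
      ≤ (∑ s ∈ Finset.range (K+1), a s * b (t-s)) * (t:ℝ)^ξ := h1
  have step3 : (∑ s ∈ Finset.range (K+1), b s) * (α-ε1)
      ≤ (∑ k ∈ Finset.range (K+1), b k * a (t-k)) * (t:ℝ)^ξ := h3
  linarith

noncomputable def Gfun (U : ℕ → ℝ) : ℕ → ℝ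
  | 0 => 1
  | (t+1) => ∑ s ∈ (Finset.range (t+1)).attach, U (t + 1 - s.1) * Gfun U s.1
decreasing_by exact Finset.mem_range.mp s.2

lemma Gfun_zero (U : ℕ → ℝ) : Gfun U 0 = 1 := by simp [Gfun]

lemma Gfun_succ (U : ℕ → ℝ) (n : ℕ) :
    Gfun U (n+1) = ∑ s ∈ Finset.range (n+1), U (n+1-s) * Gfun U s := by
  rw [Gfun]
  exact Finset.sum_attach (Finset.range (n+1)) (fun s => U (n+1-s) * Gfun U s)

lemma Gfun_nonneg (U : ℕ → ℝ) (hUnn : ∀ t, 0 ≤ U t) : ∀ t, 0 ≤ Gfun U t := by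
  intro t
  induction t using Nat.strong_induction_on with
  | _ t ih =>
    match t with
    | 0 => rw [Gfun_zero]; norm_num
    | (n+1) =>
      rw [Gfun_succ]
      refine Finset.sum_nonneg fun s hs => ?_
      exact mul_nonneg (hUnn _) (ih s (Finset.mem_range.mp hs))

lemma pconv_Gfun (U : ℕ → ℝ) (hU0 : U 0 = 0) {t : ℕ} (ht : 1 ≤ t) :
    pconv U (Gfun U) t = Gfun U t := by
  obtain ⟨n, rfl⟩ : ∃ n, t = n + 1 := ⟨t - 1, by omega⟩
  have h1 : pconv U (Gfun U) (n+1)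
      = ∑ k ∈ Finset.range (n+1+1), Gfun U k * U (n+1-k) := by
    have h1' := sum_edge_reflect U (Gfun U) (K := n+1) (t := n+1) le_rfl
    rw [Nat.sub_self, ← Finset.range_eq_Ico] at h1'
    exact h1'
  rw [h1, Finset.sum_range_succ, Nat.sub_self, hU0, mul_zero, add_zero, Gfun_succ]
  refine Finset.sum_congr rfl fun s hs => mul_comm _ _

lemma sum_Gfun_le (U : ℕ → ℝ) (hU0 : U 0 = 0) (hUnn : ∀ t, 0 ≤ U t)
    (hUsum : Summable U) (hUlt : ∑' t, U t < 1) :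
    ∀ n, ∑ t ∈ Finset.range n, Gfun U t ≤ 1/(1 - ∑' t, U t) := by
  set q := ∑' t, U t with hq
  have hq0 : 0 ≤ q := tsum_nonneg hUnn
  have h1q : 0 < 1 - q := by linarith
  intro n
  induction n using Nat.strong_induction_on with
  | _ n ih =>
    match n with
    | 0 =>
      rw [Finset.sum_range_zero]
      exact div_nonneg zero_le_one h1q.le
    | (m+1) =>
      have hterm : ∀ t ∈ Finset.range (m+1),
          Gfun U t = (if t = 0 then (1:ℝ) else 0) + pconv U (Gfun U) t := by
        intro t _
        match t with
        | 0 => simp [pconv, Gfun_zero, hU0]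
        | (k+1) => simp [pconv_Gfun U hU0 (Nat.succ_pos k)]
      rw [Finset.sum_congr rfl hterm, Finset.sum_add_distrib, Finset.sum_ite_eq'
        (Finset.range (m+1)) 0 (fun _ => (1:ℝ)), if_pos (Finset.mem_range.mpr (Nat.succ_pos m)),
        sum_pconv]
      have hbd : ∀ s ∈ Finset.range (m+1),
          U s * ∑ k ∈ Finset.range (m+1-s), Gfun U k ≤ U s * (1/(1-q)) := by
        intro s hs
        match s with
        | 0 => simp [hU0]
        | (j+1) =>
          refine mul_le_mul_of_nonneg_left ?_ (hUnn _)
          exact ih (m+1-(j+1)) (by omega)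
      have h2 : ∑ s ∈ Finset.range (m+1), U s * ∑ k ∈ Finset.range (m+1-s), Gfun U k
          ≤ q * (1/(1-q)) := by
        calc ∑ s ∈ Finset.range (m+1), U s * ∑ k ∈ Finset.range (m+1-s), Gfun U k
            ≤ ∑ s ∈ Finset.range (m+1), U s * (1/(1-q)) := Finset.sum_le_sum hbd
          _ = (∑ s ∈ Finset.range (m+1), U s) * (1/(1-q)) := by rw [Finset.sum_mul]
          _ ≤ q * (1/(1-q)) := by
              refine mul_le_mul_of_nonneg_right ?_ (div_nonneg zero_le_one h1q.le)
              exact Summable.sum_le_tsum _ (fun i _ => hUnn i) hUsum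
      have h3 : 1 + q * (1/(1-q)) = 1/(1-q) := by
        field_simp
        ring
      linarith

lemma Gfun_summable (U : ℕ → ℝ) (hU0 : U 0 = 0) (hUnn : ∀ t, 0 ≤ U t)
    (hUsum : Summable U) (hUlt : ∑' t, U t < 1) : Summable (Gfun U) :=
  summable_of_sum_range_le (Gfun_nonneg U hUnn) (sum_Gfun_le U hU0 hUnn hUsum hUlt)

lemma pconv_UG_summable (U : ℕ → ℝ) (hU0 : U 0 = 0) (hUnn : ∀ t, 0 ≤ U t)
    (hUsum : Summable U) (hUlt : ∑' t, U t < 1) : Summable (pconv U (Gfun U)) := by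
  have h1 : Summable (fun n => Gfun U (n+1)) :=
    (summable_nat_add_iff 1).mpr (Gfun_summable U hU0 hUnn hUsum hUlt)
  have h2 : Summable (fun n => pconv U (Gfun U) (n+1)) :=
    h1.congr (fun n => (pconv_Gfun U hU0 (Nat.succ_pos n)).symm)
  exact (summable_nat_add_iff 1).mp h2

lemma Gfun_tsum (U : ℕ → ℝ) (hU0 : U 0 = 0) (hUnn : ∀ t, 0 ≤ U t)
    (hUsum : Summable U) (hUlt : ∑' t, U t < 1) :
    ∑' t, Gfun U t = 1/(1 - ∑' t, U t) := by
  set q := ∑' t, U t with hq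
  have h1q : 1 - q ≠ 0 := by
    have : 0 ≤ q := tsum_nonneg hUnn
    intro h; rw [sub_eq_zero] at h; rw [← h] at hUlt; exact lt_irrefl _ hUlt
  have hGsum := Gfun_summable U hU0 hUnn hUsum hUlt
  have hGnn := Gfun_nonneg U hUnn
  have hnormU : Summable (fun t => ‖U t‖) :=
    hUsum.congr (fun t => (Real.norm_of_nonneg (hUnn t)).symm)
  have hnormG : Summable (fun t => ‖Gfun U t‖) :=
    hGsum.congr (fun t => (Real.norm_of_nonneg (hGnn t)).symm)
  have hcp := tsum_mul_tsum_eq_tsum_sum_range_of_summable_norm hnormU hnormG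
  have hcp' : q * ∑' t, Gfun U t = ∑' n, pconv U (Gfun U) n := hcp
  have hps := pconv_UG_summable U hU0 hUnn hUsum hUlt
  have h0 : pconv U (Gfun U) 0 = 0 := by simp [pconv, hU0]
  have h2 : ∑' n, pconv U (Gfun U) n = ∑' n, Gfun U (n+1) := by
    rw [Summable.tsum_eq_zero_add hps, h0, zero_add]
    exact tsum_congr (fun n => pconv_Gfun U hU0 (Nat.succ_pos n))
  have h3 : ∑' t, Gfun U t = 1 + ∑' n, Gfun U (n+1) := by
    rw [Summable.tsum_eq_zero_add hGsum, Gfun_zero]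
  rw [h2] at hcp'
  rw [eq_div_iff h1q]
  linarith [hcp', h3]

lemma tsum_tail_le (f : ℕ → ℝ) (hf : Summable f) (hfn : ∀ n, 0 ≤ f n) (k : ℕ) :
    ∑' n, f (n+k) ≤ ∑' n, f n := by
  have h1 := Summable.sum_add_tsum_nat_add k hf
  have h2 : 0 ≤ ∑ i ∈ Finset.range k, f i := Finset.sum_nonneg fun i _ => hfn i
  linarith

set_option maxHeartbeats 2000000 in
lemma Gfun_poly_bound (U : ℕ → ℝ) (ξ : ℝ) (hξ : 0 < ξ) (hU0 : U 0 = 0)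
    (hUnn : ∀ t, 0 ≤ U t) (hUsum : Summable U) (hUlt : ∑' t, U t < 1)
    (Ca : ℝ) (hCa0 : 0 ≤ Ca) (hCa : ∀ t : ℕ, U t * (t:ℝ)^ξ ≤ Ca) :
    ∃ H, 0 ≤ H ∧ ∀ t : ℕ, Gfun U t * (t:ℝ)^ξ ≤ H := by
  set q := ∑' t, U t with hqdef
  have hq0 : 0 ≤ q := tsum_nonneg hUnn
  have h1q : 0 < 1 - q := by linarith
  set G := Gfun U with hGdef
  have hGnn : ∀ t, 0 ≤ G t := Gfun_nonneg U hUnn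
  have hGsum : Summable G := Gfun_summable U hU0 hUnn hUsum hUlt
  obtain ⟨Gs, hGsdef⟩ : ∃ x, x = ∑' t, G t := ⟨_, rfl⟩
  have hGs0 : 0 ≤ Gs := hGsdef ▸ tsum_nonneg hGnn
  have hGpart : ∀ n, ∑ k ∈ Finset.range n, G k ≤ Gs := by
    intro n
    rw [hGsdef]
    exact Summable.sum_le_tsum _ (fun i _ => hGnn i) hGsum
  have hGtail : ∀ k, ∑' n, G (n+k) ≤ Gs := by
    intro k
    rw [hGsdef]
    exact tsum_tail_le G hGsum hGnn k
  have h2pos : (0:ℝ) < 2^ξ := Real.rpow_pos_of_pos two_pos ξ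
  obtain ⟨δ, hδdef⟩ : ∃ x, x = (1-q)/8 := ⟨_, rfl⟩
  have hδ : 0 < δ := by rw [hδdef]; positivity
  have hδq : q * ((1+δ)) ≤ q + (1-q)/4 := by
    have h1 : q * δ ≤ 1 * δ := mul_le_mul_of_nonneg_right (by linarith) hδ.le
    rw [hδdef] at h1
    rw [hδdef]
    nlinarith
  obtain ⟨τ, hτdef⟩ : ∃ x, x = (1-q)/(4*2^ξ) := ⟨_, rfl⟩
  have hτ : 0 < τ := by rw [hτdef]; positivity
  have hτ4 : 2^ξ * τ = (1-q)/4 := by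
    rw [hτdef]; field_simp
  obtain ⟨K, hK0⟩ := eventually_atTop.mp ((tendsto_sum_nat_add U).eventually_le_const hτ)
  have hKtail : ∑' n, U (n+(K+1)) ≤ τ := hK0 (K+1) (by omega)
  obtain ⟨T₁, hT₁⟩ := eventually_atTop.mp (ratio_rpow ξ hξ K hδ)
  obtain ⟨T₀, hT₀def⟩ : ∃ x, x = T₁ + 2*K + 2 := ⟨_, rfl⟩
  obtain ⟨D, hDdef⟩ : ∃ x, x = 2^ξ * Ca * Gs + Ca * (1+δ) * Gs := ⟨_, rfl⟩
  have hD0 : 0 ≤ D := by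
    rw [hDdef]
    have : (0:ℝ) ≤ 1 + δ := by linarith
    positivity
  have hne : (Finset.range (T₀+1)).Nonempty := ⟨0, Finset.mem_range.mpr (Nat.succ_pos _)⟩
  obtain ⟨H₀, hH₀def⟩ : ∃ x, x = (Finset.range (T₀+1)).sup' hne (fun t => G t * (t:ℝ)^ξ) :=
    ⟨_, rfl⟩
  have hH₀all : ∀ u ∈ Finset.range (T₀+1), G u * (u:ℝ)^ξ ≤ H₀ := by
    intro u hu
    rw [hH₀def]
    exact Finset.le_sup' (fun t => G t * (t:ℝ)^ξ) hu
  have hH₀0 : 0 ≤ H₀ := by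
    have h0 : G 0 * ((0:ℕ):ℝ)^ξ = 0 := by
      rw [Nat.cast_zero, Real.zero_rpow (ne_of_gt hξ), mul_zero]
    have := hH₀all 0 (Finset.mem_range.mpr (Nat.succ_pos T₀))
    rw [h0] at this
    exact this
  obtain ⟨H, hHdef⟩ : ∃ x, x = max (2*D/(1-q)) H₀ := ⟨_, rfl⟩
  have hH2 : H₀ ≤ H := hHdef ▸ le_max_right _ _
  have hH0 : 0 ≤ H := le_trans hH₀0 hH2
  have hHD : D ≤ H*(1-q)/2 := by
    have h1 : 2*D/(1-q) ≤ H := hHdef ▸ le_max_left _ _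
    rw [div_le_iff₀ h1q] at h1
    nlinarith
  refine ⟨H, hH0, ?_⟩
  intro t
  induction t using Nat.strong_induction_on with
  | _ t ih =>
    rcases le_or_gt t T₀ with hsmall | hbig
    · exact le_trans (hH₀all t (Finset.mem_range.mpr (by omega))) hH2
    · have ht1 : 1 ≤ t := by omega
      have htT : T₁ ≤ t := by omega
      have htK2 : 2*K + 2 ≤ t := by omega
      have htrat : ((t:ℝ))^ξ ≤ (1+δ) * ((t:ℝ) - K)^ξ := hT₁ t htT
      have htpos : (0:ℝ) ≤ (t:ℝ)^ξ := Real.rpow_nonneg (Nat.cast_nonneg t) ξ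
      have htKcast : ((K:ℝ)) ≤ (t:ℝ) := by exact_mod_cast (by omega : K ≤ t)
      have htKr : (0:ℝ) ≤ (t:ℝ) - K := by linarith
      rw [show G t = pconv U G t from (pconv_Gfun U hU0 ht1).symm]
      rw [pconv_split U G (K := K) (t := t) (by omega), add_mul, add_mul]
      -- Edge 1
      have hedge1 : (∑ s ∈ Finset.range (K+1), U s * G (t-s)) * (t:ℝ)^ξ
          ≤ q * ((1+δ) * H) := by
        rw [Finset.sum_mul]
        have key : ∀ s ∈ Finset.range (K+1), U s * G (t-s) * (t:ℝ)^ξ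
            ≤ U s * ((1+δ) * H) := by
          intro s hs
          have hsK : s ≤ K := by have := Finset.mem_range.mp hs; omega
          match s, hs with
          | 0, _ => simp [hU0]
          | (j+1), hs =>
            have hsK' : j + 1 ≤ K := by have := Finset.mem_range.mp hs; omega
            have hlt : t - (j+1) < t := by omega
            have hih := ih (t - (j+1)) hlt
            have hcast : ((t - (j+1) : ℕ):ℝ) = (t:ℝ) - ((j:ℝ)+1) := by
              rw [Nat.cast_sub (by omega)]; push_cast; ring
            have hsc : ((j:ℝ)+1) ≤ (K:ℝ) := by exact_mod_cast hsK'
            have h3 : ((t:ℝ))^ξ ≤ (1+δ) * ((t:ℝ) - ((j:ℝ)+1))^ξ := by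
              refine htrat.trans ?_
              have hmono := Real.rpow_le_rpow htKr
                (show (t:ℝ) - K ≤ (t:ℝ) - ((j:ℝ)+1) by linarith) hξ.le
              have : (0:ℝ) ≤ 1 + δ := by linarith
              nlinarith
            calc U (j+1) * G (t-(j+1)) * (t:ℝ)^ξ
                = U (j+1) * (G (t-(j+1)) * (t:ℝ)^ξ) := by ring
              _ ≤ U (j+1) * (G (t-(j+1)) * ((1+δ) * ((t:ℝ) - ((j:ℝ)+1))^ξ)) := by
                  apply mul_le_mul_of_nonneg_left _ (hUnn _)
                  exact mul_le_mul_of_nonneg_left h3 (hGnn _)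
              _ = U (j+1) * ((1+δ) * (G (t-(j+1)) * ((t:ℝ) - ((j:ℝ)+1))^ξ)) := by ring
              _ ≤ U (j+1) * ((1+δ) * H) := by
                  apply mul_le_mul_of_nonneg_left _ (hUnn _)
                  apply mul_le_mul_of_nonneg_left _ (by linarith)
                  rw [← hcast]
                  exact hih
        calc ∑ s ∈ Finset.range (K+1), U s * G (t-s) * (t:ℝ)^ξ
            ≤ ∑ s ∈ Finset.range (K+1), U s * ((1+δ) * H) := Finset.sum_le_sum key
          _ = (∑ s ∈ Finset.range (K+1), U s) * ((1+δ) * H) := by rw [Finset.sum_mul]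
          _ ≤ q * ((1+δ) * H) := by
              refine mul_le_mul_of_nonneg_right ?_ (by positivity)
              rw [hqdef]
              exact Summable.sum_le_tsum _ (fun i _ => hUnn i) hUsum
      -- Middle
      have hmid : (∑ s ∈ Finset.Ico (K+1) (t-K), U s * G (t-s)) * (t:ℝ)^ξ
          ≤ 2^ξ * (H * (∑' n, U (n+(K+1))) + Ca * (∑' n, G (n+(K+1)))) := by
        apply mid_sum_bound ξ hξ U G hUnn hGnn hUsum hGsum K t H Ca hH0 hCa0
        intro s hs1 hs2
        rcases le_or_gt (2*s) t with hcase | hcase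
        · have h2' : t ≤ 2*(t-s) := by omega
          have hrp : ((t:ℝ))^ξ ≤ 2^ξ * (((t-s:ℕ)):ℝ)^ξ := half_rpow ξ hξ h2'
          have hlt : t - s < t := by omega
          have hih := ih (t-s) hlt
          calc U s * G (t-s) * (t:ℝ)^ξ
              ≤ U s * G (t-s) * (2^ξ * ((t-s:ℕ):ℝ)^ξ) :=
                mul_le_mul_of_nonneg_left hrp (mul_nonneg (hUnn s) (hGnn _))
            _ = 2^ξ * (U s * (G (t-s) * ((t-s:ℕ):ℝ)^ξ)) := by ring
            _ ≤ 2^ξ * (U s * H) := by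
                apply mul_le_mul_of_nonneg_left _ h2pos.le
                exact mul_le_mul_of_nonneg_left hih (hUnn s)
            _ = 2^ξ * (H * U s) := by ring
            _ ≤ 2^ξ * (H * U s + Ca * G (t-s)) :=
                mul_le_mul_of_nonneg_left
                  (le_add_of_nonneg_right (mul_nonneg hCa0 (hGnn _))) h2pos.le
        · have h2' : t ≤ 2*s := by omega
          have hrp : ((t:ℝ))^ξ ≤ 2^ξ * ((s:ℕ):ℝ)^ξ := half_rpow ξ hξ h2'
          calc U s * G (t-s) * (t:ℝ)^ξ
              ≤ U s * G (t-s) * (2^ξ * ((s:ℕ):ℝ)^ξ) :=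
                mul_le_mul_of_nonneg_left hrp (mul_nonneg (hUnn s) (hGnn _))
            _ = 2^ξ * (G (t-s) * (U s * ((s:ℕ):ℝ)^ξ)) := by ring
            _ ≤ 2^ξ * (G (t-s) * Ca) := by
                apply mul_le_mul_of_nonneg_left _ h2pos.le
                exact mul_le_mul_of_nonneg_left (hCa _) (hGnn _)
            _ = 2^ξ * (Ca * G (t-s)) := by ring
            _ ≤ 2^ξ * (H * U s + Ca * G (t-s)) :=
                mul_le_mul_of_nonneg_left
                  (le_add_of_nonneg_left (mul_nonneg hH0 (hUnn s))) h2pos.le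
      -- Edge 3
      have hedge3 : (∑ k ∈ Finset.range (K+1), G k * U (t-k)) * (t:ℝ)^ξ
          ≤ Gs * (Ca * (1+δ)) := by
        rw [Finset.sum_mul]
        have key : ∀ k ∈ Finset.range (K+1), G k * U (t-k) * (t:ℝ)^ξ
            ≤ G k * (Ca * (1+δ)) := by
          intro k hk
          have hkK : k ≤ K := by have := Finset.mem_range.mp hk; omega
          have hcast : ((t - k : ℕ):ℝ) = (t:ℝ) - (k:ℝ) := by
            rw [Nat.cast_sub (by omega)]
          have hsc : ((k:ℝ)) ≤ (K:ℝ) := by exact_mod_cast hkK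
          have h3 : ((t:ℝ))^ξ ≤ (1+δ) * ((t:ℝ) - (k:ℝ))^ξ := by
            refine htrat.trans ?_
            have hmono := Real.rpow_le_rpow htKr
              (show (t:ℝ) - K ≤ (t:ℝ) - (k:ℝ) by linarith) hξ.le
            have : (0:ℝ) ≤ 1 + δ := by linarith
            nlinarith
          calc G k * U (t-k) * (t:ℝ)^ξ = G k * (U (t-k) * (t:ℝ)^ξ) := by ring
            _ ≤ G k * (U (t-k) * ((1+δ) * ((t:ℝ) - (k:ℝ))^ξ)) := by
                apply mul_le_mul_of_nonneg_left _ (hGnn _)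
                exact mul_le_mul_of_nonneg_left h3 (hUnn _)
            _ = G k * ((1+δ) * (U (t-k) * ((t:ℝ) - (k:ℝ))^ξ)) := by ring
            _ ≤ G k * ((1+δ) * Ca) := by
                apply mul_le_mul_of_nonneg_left _ (hGnn _)
                apply mul_le_mul_of_nonneg_left _ (by linarith)
                rw [← hcast]
                exact hCa _
            _ = G k * (Ca * (1+δ)) := by ring
        calc ∑ k ∈ Finset.range (K+1), G k * U (t-k) * (t:ℝ)^ξ
            ≤ ∑ k ∈ Finset.range (K+1), G k * (Ca * (1+δ)) := Finset.sum_le_sum key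
          _ = (∑ k ∈ Finset.range (K+1), G k) * (Ca * (1+δ)) := by rw [Finset.sum_mul]
          _ ≤ Gs * (Ca * (1+δ)) := by
              refine mul_le_mul_of_nonneg_right (hGpart (K+1)) ?_
              have : (0:ℝ) ≤ 1 + δ := by linarith
              positivity
      -- combine
      have hmid' : (∑ s ∈ Finset.Ico (K+1) (t-K), U s * G (t-s)) * (t:ℝ)^ξ
          ≤ H * (1-q)/4 + 2^ξ * Ca * Gs := by
        have i1 : H * (∑' n, U (n+(K+1))) ≤ H * τ :=
          mul_le_mul_of_nonneg_left hKtail hH0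
        have i2 : Ca * (∑' n, G (n+(K+1))) ≤ Ca * Gs :=
          mul_le_mul_of_nonneg_left (hGtail (K+1)) hCa0
        have j1 : 2^ξ * (H * τ) = H * (1-q)/4 := by
          rw [show 2^ξ * (H * τ) = H * (2^ξ * τ) by ring, hτ4]
          ring
        have k1 : 2^ξ * (H * (∑' n, U (n+(K+1))) + Ca * (∑' n, G (n+(K+1))))
            ≤ 2^ξ * (H * τ + Ca * Gs) :=
          mul_le_mul_of_nonneg_left (by linarith) h2pos.le
        have k2 : 2^ξ * (H * τ + Ca * Gs) = H * (1-q)/4 + 2^ξ * Ca * Gs := by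
          rw [mul_add, j1]
          ring
        linarith
      have hq1δ : q * ((1+δ) * H) ≤ (q + (1-q)/4) * H := by
        have := mul_le_mul_of_nonneg_right hδq hH0
        calc q * ((1+δ) * H) = (q * (1+δ)) * H := by ring
          _ ≤ (q + (1-q)/4) * H := this
      have hDexp : Gs * (Ca * (1+δ)) + 2^ξ * Ca * Gs = D := by
        rw [hDdef]; ring
      nlinarith [hedge1, hmid', hedge3, hHD, hq1δ, hH0]
lemma le_of_forall_pos_le_add' {a b : ℝ} (h : ∀ ε : ℝ, 0 < ε → a ≤ b + ε) : a ≤ b := by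
  by_contra hc
  push_neg at hc
  have := h ((a-b)/2) (by linarith)
  linarith

set_option maxHeartbeats 1000000 in
lemma Gfun_limit (U : ℕ → ℝ) (ξ C_U : ℝ) (hξ : 0 < ξ) (hU0 : U 0 = 0)
    (hUnn : ∀ t, 0 ≤ U t) (hUsum : Summable U) (hUlt : ∑' t, U t < 1) (hCU0 : 0 ≤ C_U)
    (hU : Tendsto (fun t : ℕ => U t * (t:ℝ)^ξ) atTop (nhds C_U)) :
    Tendsto (fun t : ℕ => Gfun U t * (t:ℝ)^ξ) atTop
      (nhds (C_U / (1 - ∑' t, U t)^2)) := by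
  set q := ∑' t, U t with hqdef
  have hq0 : 0 ≤ q := tsum_nonneg hUnn
  have h1q : 0 < 1 - q := by linarith
  set G := Gfun U with hGdef
  have hGnn : ∀ t, 0 ≤ G t := Gfun_nonneg U hUnn
  have hGsum : Summable G := Gfun_summable U hU0 hUnn hUsum hUlt
  have hGs : ∑' t, G t = 1/(1-q) := Gfun_tsum U hU0 hUnn hUsum hUlt
  obtain ⟨Ca, hCa0, _, hCa⟩ := exists_global_bound U ξ (C_U+1)
    (hU.eventually_le_const (lt_add_one C_U))
  obtain ⟨H, hH0, hH⟩ := Gfun_poly_bound U ξ hξ hU0 hUnn hUsum hUlt Ca hCa0 hCa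
  set h : ℕ → ℝ := fun t => G t * (t:ℝ)^ξ with hhdef
  have hhn : ∀ t, 0 ≤ h t := fun t => mul_nonneg (hGnn t) (Real.rpow_nonneg (Nat.cast_nonneg t) ξ)
  have hbdd : IsBoundedUnder (· ≤ ·) atTop h := isBoundedUnder_of ⟨H, fun t => hH t⟩
  have hbdd' : IsBoundedUnder (· ≥ ·) atTop h := isBoundedUnder_of ⟨0, fun t => hhn t⟩
  have hcob : IsCoboundedUnder (· ≤ ·) atTop h := hbdd'.isCoboundedUnder_le
  have hcob' : IsCoboundedUnder (· ≥ ·) atTop h := hbdd.isCoboundedUnder_ge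
  set M := limsup h atTop with hMdef
  set m := liminf h atTop with hmdef
  have hmM : m ≤ M := liminf_le_limsup hbdd hbdd'
  have hm0 : 0 ≤ m := le_liminf_of_le hcob' (Eventually.of_forall hhn)
  have hM0 : 0 ≤ M := le_trans hm0 hmM
  have ha_up : ∀ ε : ℝ, ε > 0 → ∀ᶠ t : ℕ in atTop, U t * (t:ℝ)^ξ ≤ C_U + ε :=
    fun ε hε => hU.eventually_le_const (by linarith)
  have ha_lo : ∀ ε : ℝ, ε > 0 → ∀ᶠ t : ℕ in atTop, C_U - ε ≤ U t * (t:ℝ)^ξ :=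
    fun ε hε => (hU.eventually_const_le (by linarith)).mono (fun t ht => ht)
  have hb_up : ∀ ε : ℝ, ε > 0 → ∀ᶠ t : ℕ in atTop, G t * (t:ℝ)^ξ ≤ M + ε := by
    intro ε hε
    exact (eventually_lt_of_limsup_lt (by linarith : limsup h atTop < M + ε) hbdd).mono
      (fun t ht => ht.le)
  have hb_lo : ∀ ε : ℝ, ε > 0 → ∀ᶠ t : ℕ in atTop, m - ε ≤ G t * (t:ℝ)^ξ := by
    intro ε hε
    exact (eventually_lt_of_lt_liminf (by linarith : m - ε < liminf h atTop) hbdd').mono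
      (fun t ht => ht.le)
  -- upper bound on M
  have hMle : M ≤ q * M + (1/(1-q)) * C_U := by
    refine le_of_forall_pos_le_add' ?_
    intro ε hε
    have hup := pconv_upper U G ξ C_U M hξ hUnn hGnn hUsum hGsum hCU0 hM0 ha_up
      (by intro ε' hε'; exact hb_up ε' hε') hε
    have hup' : ∀ᶠ t : ℕ in atTop, h t ≤ q * M + (1/(1-q)) * C_U + ε := by
      filter_upwards [hup, eventually_ge_atTop 1] with t h1 h2
      rw [pconv_Gfun U hU0 h2, ← hqdef, hGs] at h1
      exact h1
    exact limsup_le_of_le hcob hup'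
  -- lower bound on m
  have hmge : q * m + (1/(1-q)) * C_U ≤ m := by
    have h2 : ∀ ε : ℝ, 0 < ε → q * m + (1/(1-q)) * C_U ≤ m + ε := by
      intro ε hε
      have hlo := pconv_lower U G ξ C_U m hξ hUnn hGnn hUsum hGsum hCU0 hm0 ha_lo
        (by intro ε' hε'; exact hb_lo ε' hε') hε
      have hlo' : ∀ᶠ t : ℕ in atTop, q * m + (1/(1-q)) * C_U - ε ≤ h t := by
        filter_upwards [hlo, eventually_ge_atTop 1] with t h1 h2
        rw [pconv_Gfun U hU0 h2, ← hqdef, hGs] at h1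
        exact h1
      have h3 := le_liminf_of_le hcob' hlo'
      rw [← hmdef] at h3
      linarith
    exact le_of_forall_pos_le_add' h2
  have hMval : M ≤ (1/(1-q)) * C_U / (1-q) := by
    rw [le_div_iff₀ h1q]
    nlinarith
  have hmval : (1/(1-q)) * C_U / (1-q) ≤ m := by
    rw [div_le_iff₀ h1q]
    nlinarith
  have hval : (1/(1-q)) * C_U / (1-q) = C_U / (1-q)^2 := by
    rw [sq]
    field_simp
  have := tendsto_of_le_liminf_of_limsup_le (hval ▸ hmval) (hval ▸ hMval) hbdd hbdd'
  exact this

lemma coeff_mk_mul_mk (f g : ℕ → ℝ) (n : ℕ) :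
    (PowerSeries.coeff n) (PowerSeries.mk f * PowerSeries.mk g)
      = ∑ s ∈ Finset.range (n+1), f s * g (n - s) := by
  rw [PowerSeries.coeff_mul, Finset.Nat.sum_antidiagonal_eq_sum_range_succ_mk]
  simp [PowerSeries.coeff_mk]

lemma L_eq (U V L : ℕ → ℝ) (hU0 : U 0 = 0)
    (hL : ∀ t, L t = (1/2) * V (t+1) + ∑ s ∈ Finset.Icc 1 t, U s * L (t - s)) :
    ∀ t, L t = (1/2) * pconv (fun s => V (s+1)) (Gfun U) t := by
  classical
  have hUG : (1 - PowerSeries.mk U) * PowerSeries.mk (Gfun U) = 1 := by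
    have hr : (1 - PowerSeries.mk U) * PowerSeries.mk (Gfun U)
        = PowerSeries.mk (Gfun U) - PowerSeries.mk U * PowerSeries.mk (Gfun U) := by ring
    rw [hr]
    ext n
    rw [map_sub, coeff_mk_mul_mk, PowerSeries.coeff_mk, PowerSeries.coeff_one]
    match n with
    | 0 => simp [Gfun_zero, hU0]
    | (k+1) =>
      have h1 : ∑ s ∈ Finset.range (k+1+1), U s * Gfun U (k+1-s) = Gfun U (k+1) :=
        pconv_Gfun U hU0 (Nat.succ_pos k)
      simp [h1]
  have hUL : (1 - PowerSeries.mk U) * PowerSeries.mk L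
      = (PowerSeries.C (1/2)) * PowerSeries.mk (fun s => V (s+1)) := by
    have hr : (1 - PowerSeries.mk U) * PowerSeries.mk L
        = PowerSeries.mk L - PowerSeries.mk U * PowerSeries.mk L := by ring
    rw [hr]
    ext n
    rw [map_sub, coeff_mk_mul_mk, PowerSeries.coeff_mk, PowerSeries.coeff_C_mul,
      PowerSeries.coeff_mk]
    have hsum : ∑ s ∈ Finset.Icc 1 n, U s * L (n-s)
        = ∑ s ∈ Finset.range (n+1), U s * L (n-s) := by
      apply Finset.sum_subset
      · intro x hx
        simp only [Finset.mem_Icc] at hx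
        exact Finset.mem_range.mpr (by omega)
      · intro x hx hnx
        simp only [Finset.mem_range] at hx
        simp only [Finset.mem_Icc] at hnx
        have : x = 0 := by omega
        rw [this, hU0, zero_mul]
    rw [← hsum, hL n]
    ring
  have hG1 : PowerSeries.mk (Gfun U) * (1 - PowerSeries.mk U) = 1 := by
    rw [mul_comm]; exact hUG
  have hLform : PowerSeries.mk L
      = (PowerSeries.C (1/2)) * (PowerSeries.mk (fun s => V (s+1)) * PowerSeries.mk (Gfun U)) := by
    calc PowerSeries.mk L = 1 * PowerSeries.mk L := (one_mul _).symm
      _ = (PowerSeries.mk (Gfun U) * (1 - PowerSeries.mk U)) * PowerSeries.mk L := by rw [hG1]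
      _ = PowerSeries.mk (Gfun U) * ((1 - PowerSeries.mk U) * PowerSeries.mk L) := by ring
      _ = PowerSeries.mk (Gfun U)
          * ((PowerSeries.C (1/2)) * PowerSeries.mk (fun s => V (s+1))) := by rw [hUL]
      _ = (PowerSeries.C (1/2))
          * (PowerSeries.mk (fun s => V (s+1)) * PowerSeries.mk (Gfun U)) := by ring
  intro t
  have h2 := congrArg (PowerSeries.coeff t) hLform
  rw [PowerSeries.coeff_mk, PowerSeries.coeff_C_mul, coeff_mk_mul_mk] at h2
  exact h2

end Stmt13

open Filter Stmt13 in
/-- Noise-dominated regime: with `L` given by the propagator expansion (renewal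
recursion `L_t = ½ V_{t+1} + Σ_{s=1}^t U_s L_{t−s}`), if `U_Σ < 1`,
`U_t = C_U t^{−ξ_U}(1+o(1))`, `V_t = O(t^{−ξ_V})` with `ξ_V > ξ_U > 1` and `C_U > 0`, then
`L_t = (V_Σ C_U / (2(1−U_Σ)²)) t^{−ξ_U}(1+o(1))`, where `V_Σ = Σ_{t≥1} V_t`. -/
theorem stmt_13 (U V L : ℕ → ℝ) (ξU ξV C_U : ℝ)
    (hU0 : U 0 = 0) (hV0 : V 0 = 0) (hUnn : ∀ t, 0 ≤ U t) (hVnn : ∀ t, 0 ≤ V t)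
    (hL : ∀ t, L t = (1 / 2) * V (t + 1) + ∑ s ∈ Finset.Icc 1 t, U s * L (t - s))
    (hUsum : Summable U) (hUlt : ∑' t, U t < 1)
    (hCU : 0 < C_U)
    (hU : Filter.Tendsto (fun t : ℕ => U t * (t : ℝ) ^ ξU) Filter.atTop (nhds C_U))
    (hVb : ∃ C : ℝ, ∀ t : ℕ, 1 ≤ t → V t ≤ C * (t : ℝ) ^ (-ξV))
    (hξ : ξV > ξU) (hξU : 1 < ξU) :
    Filter.Tendsto (fun t : ℕ => L t * (t : ℝ) ^ ξU) Filter.atTop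
      (nhds ((∑' t, V t) * C_U / (2 * (1 - ∑' t, U t) ^ 2))) := by
  have hξpos : 0 < ξU := lt_trans one_pos hξU
  have hq0 : 0 ≤ ∑' t, U t := tsum_nonneg hUnn
  have h1q : 0 < 1 - ∑' t, U t := by linarith
  obtain ⟨C, hC⟩ := hVb
  have hC0 : 0 ≤ C := by
    have h1 := hC 1 le_rfl
    rw [Nat.cast_one, Real.one_rpow, mul_one] at h1
    exact le_trans (hVnn 1) h1
  have hVle : ∀ t : ℕ, V t ≤ C * (t:ℝ)^(-ξV) := by
    intro t
    match t with
    | 0 =>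
      rw [hV0, Nat.cast_zero, Real.zero_rpow (by intro h; simp at h; linarith), mul_zero]
    | (k+1) => exact hC (k+1) (Nat.succ_pos k)
  have hVsum : Summable V := by
    refine Summable.of_nonneg_of_le hVnn hVle ?_
    exact (Real.summable_nat_rpow.mpr (by linarith : -ξV < -1)).mul_left C
  have hVs_sum : Summable (fun s : ℕ => V (s+1)) := (summable_nat_add_iff 1).mpr hVsum
  have hVsnn : ∀ t : ℕ, 0 ≤ V (t+1) := fun t => hVnn (t+1)
  have hVs_tsum : ∑' s : ℕ, V (s+1) = ∑' t, V t := by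
    rw [Summable.tsum_eq_zero_add hVsum, hV0, zero_add]
  have hVs0 : Tendsto (fun t : ℕ => V (t+1) * (t:ℝ)^ξU) atTop (nhds 0) := by
    have hg : Tendsto (fun t : ℕ => C * (t:ℝ)^(ξU - ξV)) atTop (nhds 0) := by
      have h1 : Tendsto (fun x : ℝ => x^(-(ξV - ξU))) atTop (nhds 0) :=
        tendsto_rpow_neg_atTop (by linarith)
      have h2 : Tendsto (fun t : ℕ => ((t:ℝ))^(ξU - ξV)) atTop (nhds 0) := by
        have h3 := h1.comp (tendsto_natCast_atTop_atTop (R := ℝ))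
        simpa [Function.comp_def, neg_sub] using h3
      simpa using h2.const_mul C
    apply squeeze_zero' ?_ ?_ hg
    · filter_upwards with t
      exact mul_nonneg (hVnn _) (Real.rpow_nonneg (Nat.cast_nonneg t) ξU)
    · filter_upwards [eventually_ge_atTop 1] with t ht
      have ht0 : (0:ℝ) < (t:ℝ) := by exact_mod_cast ht
      have h3 : V (t+1) ≤ C * ((t:ℝ))^(-ξV) := by
        refine le_trans (hC (t+1) (by omega)) ?_
        apply mul_le_mul_of_nonneg_left _ hC0
        apply Real.rpow_le_rpow_of_nonpos ht0 (by push_cast; linarith) (by linarith)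
      calc V (t+1) * (t:ℝ)^ξU ≤ (C * ((t:ℝ))^(-ξV)) * (t:ℝ)^ξU :=
            mul_le_mul_of_nonneg_right h3 (Real.rpow_nonneg (Nat.cast_nonneg t) ξU)
        _ = C * (t:ℝ)^(ξU - ξV) := by
            rw [mul_assoc, ← Real.rpow_add ht0]
            ring_nf
  have hGlim := Gfun_limit U ξU C_U hξpos hU0 hUnn hUsum hUlt hCU.le hU
  have hGnn := Gfun_nonneg U hUnn
  have hGsum := Gfun_summable U hU0 hUnn hUsum hUlt
  have hℓ0 : 0 ≤ C_U / (1 - ∑' t, U t)^2 := div_nonneg hCU.le (sq_nonneg _)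
  have hconv : Tendsto (fun t : ℕ => pconv (fun s => V (s+1)) (Gfun U) t * (t:ℝ)^ξU) atTop
      (nhds ((∑' s : ℕ, V (s+1)) * (C_U / (1 - ∑' t, U t)^2))) := by
    apply tendsto_of_bounds
    · intro ε hε
      have h1 := pconv_upper (fun s => V (s+1)) (Gfun U) ξU 0
        (C_U / (1 - ∑' t, U t)^2) hξpos hVsnn hGnn hVs_sum hGsum le_rfl hℓ0
        (fun ε' hε' => hVs0.eventually_le_const (by linarith))
        (fun ε' hε' => hGlim.eventually_le_const (by linarith)) hε
      refine h1.mono fun t ht => ?_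
      linarith [ht]
    · intro ε hε
      have h1 := pconv_lower (fun s => V (s+1)) (Gfun U) ξU 0
        (C_U / (1 - ∑' t, U t)^2) hξpos hVsnn hGnn hVs_sum hGsum le_rfl hℓ0
        (fun ε' hε' => Eventually.of_forall (fun t => by
          have := mul_nonneg (hVsnn t) (Real.rpow_nonneg (Nat.cast_nonneg t) ξU)
          linarith))
        (fun ε' hε' => hGlim.eventually_const_le (by linarith)) hε
      refine h1.mono fun t ht => ?_
      linarith [ht]
  have hLmul : Tendsto (fun t : ℕ => L t * (t:ℝ)^ξU) atTop
      (nhds ((1/2) * ((∑' s : ℕ, V (s+1)) * (C_U / (1 - ∑' t, U t)^2)))) := by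
    have h2 := hconv.const_mul (1/2 : ℝ)
    refine h2.congr fun t => ?_
    rw [L_eq U V L hU0 hL t]
    ring
  have hval : (1/2) * ((∑' s : ℕ, V (s+1)) * (C_U / (1 - ∑' t, U t)^2))
      = (∑' t, V t) * C_U / (2 * (1 - ∑' t, U t) ^ 2) := by
    rw [hVs_tsum]
    have hne : (1 - ∑' t, U t)^2 ≠ 0 := pow_ne_zero 2 (by linarith)
    field_simp
  rwa [hval] at hLmul
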